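/- Let J be a real symmetric n×n matrix, and let Ω, M : ℝ → Matₙ(ℝ) and p : ℝ → ℝⁿ be differentiable with Ω(t) skew-symmetric for all t, M = JΩ + ΩJ, Ṁ = [M,Ω] + p(Jp)ᵀ − (Jp)pᵀ, and ṗ = −Ωp (the Clebsch system). Then the symmetric matrix P(t) := p(t)p(t)ᵀ satisfies Ṗ = [P,Ω] and [P,J] = p(Jp)ᵀ − (Jp)pᵀ, so that (M, P) solves the equations Ṁ = [M,Ω] + [P,J], Ṗ = [P,Ω] of a rigid body in a quadratic potential. -/

import Mathlib

open Matrix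

/-- For the Clebsch system (`M = JΩ + ΩJ`, `Ṁ = [M,Ω] + p(Jp)ᵀ − (Jp)pᵀ`, `ṗ = −Ωp`,
`Ω` skew, `J` symmetric), the rank-one symmetric matrix `P := ppᵀ` satisfies
`Ṗ = [P,Ω]` and `[P,J] = p(Jp)ᵀ − (Jp)pᵀ`, so that `(M,P)` solves the equations
`Ṁ = [M,Ω] + [P,J]`, `Ṗ = [P,Ω]` of a rigid body in a quadratic potential. -/
theorem stmt_16 (n : ℕ) (J : Matrix (Fin n) (Fin n) ℝ) (hJ : Jᵀ = J)
    (Ω M : ℝ → Matrix (Fin n) (Fin n) ℝ) (p : ℝ → Fin n → ℝ)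
    (hΩdiff : ∀ i j, Differentiable ℝ fun t => Ω t i j)
    (hΩskew : ∀ t, (Ω t)ᵀ = -Ω t)
    (hMdef : ∀ t, M t = J * Ω t + Ω t * J)
    (hM : ∀ t, ∀ i j, HasDerivAt (fun s => M s i j)
      ((M t * Ω t - Ω t * M t
        + (vecMulVec (p t) ((J : Matrix (Fin n) (Fin n) ℝ).mulVec (p t))
          - vecMulVec (J.mulVec (p t)) (p t))) i j) t)
    (hp : ∀ t, ∀ i, HasDerivAt (fun s => p s i) (-(Ω t).mulVec (p t) i) t) :
    ∀ t,
      (∀ i j, HasDerivAt (fun s => vecMulVec (p s) (p s) i j)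
        ((vecMulVec (p t) (p t) * Ω t - Ω t * vecMulVec (p t) (p t)) i j) t) ∧
      (vecMulVec (p t) (p t) * J - J * vecMulVec (p t) (p t)
        = vecMulVec (p t) (J.mulVec (p t)) - vecMulVec (J.mulVec (p t)) (p t)) ∧
      (∀ i j, HasDerivAt (fun s => M s i j)
        ((M t * Ω t - Ω t * M t
          + (vecMulVec (p t) (p t) * J - J * vecMulVec (p t) (p t))) i j) t) := by
  intro t
  have hskew : ∀ i j, Ω t j i = -Ω t i j := fun i j => by
    have := congrFun (congrFun (hΩskew t) i) j
    simpa [Matrix.transpose_apply] using this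
  have hJsym : ∀ i j, J j i = J i j := fun i j => by
    have := congrFun (congrFun hJ i) j
    simpa [Matrix.transpose_apply] using this
  have h2 : vecMulVec (p t) (p t) * J - J * vecMulVec (p t) (p t)
      = vecMulVec (p t) (J.mulVec (p t)) - vecMulVec (J.mulVec (p t)) (p t) := by
    ext i j
    simp only [Matrix.sub_apply, Matrix.mul_apply, vecMulVec_apply, mulVec, dotProduct]
    have e1 : ∑ k, p t i * p t k * J k j = p t i * ∑ k, J j k * p t k := by
      rw [Finset.mul_sum]
      exact Finset.sum_congr rfl fun k _ => by rw [hJsym k j]; ring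
    have e2 : ∑ k, J i k * (p t k * p t j) = (∑ k, J i k * p t k) * p t j := by
      rw [Finset.sum_mul]; exact Finset.sum_congr rfl fun k _ => by ring
    rw [e1, e2]
  refine ⟨?_, h2, ?_⟩
  · intro i j
    have h1 := (hp t i).mul (hp t j)
    have : (fun s => vecMulVec (p s) (p s) i j) = fun s => p s i * p s j := by
      funext s; simp [vecMulVec_apply]
    rw [this]
    refine h1.congr_deriv ?_
    simp only [Matrix.sub_apply, Matrix.mul_apply, vecMulVec_apply, mulVec, dotProduct,
      Pi.neg_apply]
    have e1 : ∑ k, p t i * p t k * Ω t k j = -(p t i * ∑ k, Ω t j k * p t k) := by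
      rw [Finset.mul_sum, ← Finset.sum_neg_distrib]
      exact Finset.sum_congr rfl fun k _ => by rw [hskew k j]; ring
    have e2 : ∑ k, Ω t i k * (p t k * p t j) = (∑ k, Ω t i k * p t k) * p t j := by
      rw [Finset.sum_mul]; exact Finset.sum_congr rfl fun k _ => by ring
    rw [e1, e2]; ring
  · intro i j
    have := hM t i j
    rwa [← h2] at this
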